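/- Each of the following four vectors lies in Γ^∨, satisfies ⟨K, ρ⟩ = −2, and admits the indicated representation as a nonnegative integer combination of elements of 𝒜 (hence lies in cone(𝒜)): ρ₁ := 3e_L + Σ_{{a,b}⊂{1,…,5}} e_{ab} = A_{15} + A_{13} + A_{35} + 2B_{246}; ρ₂ := e_L + e_5 = A_{34;5} + B_{126}; ρ₃ := 2e_L + e_{14} + e_{15} + e_{24} + e_{25} + e_{34} + e_{35} = A_{15} + A_{14} + 2B_{236}; ρ₄ := e_L + e_{25} + e_{34} = A_{25} + B_{146} + B_{136}. (These are the anticanonical-degree-2 representatives of the 𝔖₆-orbits of coextremal rays of M̄_{0,6}.) -/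

import Mathlib

noncomputable section

/-- Index in `Fin 16` of the exceptional class `E_{ab}` attached to a pair of points
(points written `0`-based as elements of `Fin 5`, assuming `a < b`):
`(0,1) ↦ 6, (0,2) ↦ 7, …, (3,4) ↦ 15`. -/
def pairIdx : ℕ → ℕ → Fin 16
  | 0, 1 => 6
  | 0, 2 => 7
  | 0, 3 => 8
  | 0, 4 => 9
  | 1, 2 => 10
  | 1, 3 => 11
  | 1, 4 => 12
  | 2, 3 => 13
  | 2, 4 => 14
  | 3, 4 => 15
  | _, _ => 0

/-- The coordinate vector `e_L` (the class `L`). -/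
def eL : Fin 16 → ℝ := Pi.single 0 1

/-- The coordinate vector `e_i` for the point `i ∈ {1,…,5}` (represented `0`-based
by `i : Fin 5`). -/
def eP (i : Fin 5) : Fin 16 → ℝ := Pi.single ⟨i.val + 1, by omega⟩ 1

/-- The coordinate vector `e_{ab}` for a 2-element subset `{a,b} ⊂ {1,…,5}`
(represented `0`-based); symmetric in `a` and `b`. -/
def eE (a b : Fin 5) : Fin 16 → ℝ :=
  Pi.single (if a.val < b.val then pairIdx a.val b.val else pairIdx b.val a.val) 1

/-- The standard inner product on `ℝ¹⁶`. -/
def ip (x y : Fin 16 → ℝ) : ℝ := ∑ i, x i * y i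

def Distinct3 (k l m : Fin 5) : Prop := k ≠ l ∧ k ≠ m ∧ l ≠ m

def Distinct5 (i j k l m : Fin 5) : Prop :=
  i ≠ j ∧ i ≠ k ∧ i ≠ l ∧ i ≠ m ∧ j ≠ k ∧ j ≠ l ∧ j ≠ m ∧ k ≠ l ∧ k ≠ m ∧ l ≠ m

/-- The 40 classes: 25 boundary divisors and 15 fixed-point divisors `F_σ` of `M̄₀₆`. -/
def Gamma : Set (Fin 16 → ℝ) :=
  {v | (∃ i : Fin 5, v = eP i) ∨
       (∃ a b : Fin 5, a ≠ b ∧ v = eE a b) ∨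
       (∃ k l m : Fin 5, Distinct3 k l m ∧
          v = eL - eP k - eP l - eP m - eE k l - eE k m - eE l m) ∨
       (∃ j a b c d : Fin 5, Distinct5 j a b c d ∧
          v = (2 : ℝ) • eL - (∑ i, eP i) - eE a c - eE a d - eE b c - eE b d)}

/-- The dual cone `Γ^∨ = {v : ⟨g,v⟩ ≥ 0 for all g ∈ Γ}`. -/
def GammaDual : Set (Fin 16 → ℝ) := {v | ∀ gv ∈ Gamma, 0 ≤ ip gv v}
/-- `B_{ab6} = -e_{ab}` for a pair `{a,b} ⊂ {1,…,5}`. -/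
def B6 (a b : Fin 5) : Fin 16 → ℝ := -(eE a b)

/-- `B_{ijk} = e_L + e_a + e_b - e_{ab}` for a 3-element `{i,j,k} ⊂ {1,…,5}`
with complement `{a,b}`. -/
def Bv (i j k a b : Fin 5) : Fin 16 → ℝ := eL + eP a + eP b - eE a b

/-- `A_{ij} = e_L + e_{ij} + e_{kl} + e_{km} + e_{lm}` for a pair `{i,j} ⊂ {1,…,5}`
with complement `{k,l,m}`. -/
def A2 (i j k l m : Fin 5) : Fin 16 → ℝ := eL + eE i j + eE k l + eE k m + eE l m

/-- `A_{i6} = -2e_i + Σ_{j≠i} e_{ij}`. -/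
def A6 (i : Fin 5) : Fin 16 → ℝ :=
  -((2 : ℝ) • eP i) + ∑ j, if j ≠ i then eE i j else 0

/-- `A_{ij;k} = e_L + e_k + e_{ab}` for distinct `i,j,k ∈ {1,…,5}`
with `{a,b}` the complement of `{i,j,k}`. -/
def A3 (i j k a b : Fin 5) : Fin 16 → ℝ := eL + eP k + eE a b

/-- `A_{ij;6} = 2e_L + e_k + e_l + e_m + e_{ij}` for a pair `{i,j} ⊂ {1,…,5}`
with complement `{k,l,m}`. -/
def A36 (i j k l m : Fin 5) : Fin 16 → ℝ := (2 : ℝ) • eL + eP k + eP l + eP m + eE i j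

/-- `A_{i6;k} = -e_i + e_{ik}` for distinct `i,k ∈ {1,…,5}`. -/
def A63 (i k : Fin 5) : Fin 16 → ℝ := -(eP i) + eE i k

/-- The set `𝒜` of 95 vectors: pushforwards of the generators of the nef curve cones
of the boundary divisors of `M̄₀₆`. -/
def Aset : Set (Fin 16 → ℝ) :=
  {v | (∃ a b, a ≠ b ∧ v = B6 a b) ∨
       (∃ i j k a b, Distinct5 i j k a b ∧ v = Bv i j k a b) ∨
       (∃ i j k l m, Distinct5 i j k l m ∧ v = A2 i j k l m) ∨
       (∃ i, v = A6 i) ∨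
       (∃ i j k a b, Distinct5 i j k a b ∧ v = A3 i j k a b) ∨
       (∃ i j k l m, Distinct5 i j k l m ∧ v = A36 i j k l m) ∨
       (∃ i k, i ≠ k ∧ v = A63 i k)}

/-- The convex cone generated by a set: all finite nonnegative combinations. -/
def coneGen (S : Set (Fin 16 → ℝ)) : Set (Fin 16 → ℝ) :=
  {v | ∃ (n : ℕ) (c : Fin n → ℝ) (x : Fin n → (Fin 16 → ℝ)),
      (∀ t, 0 ≤ c t) ∧ (∀ t, x t ∈ S) ∧ v = ∑ t, c t • x t}
/-- The canonical class `K = -4e_L + 2(e_1 + ⋯ + e_5) + Σ_{{a,b}} e_{ab}` of `M̄₀₆`. -/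
def Kcl : Fin 16 → ℝ :=
  -((4 : ℝ) • eL) + (2 : ℝ) • (∑ i, eP i) +
    ∑ a : Fin 5, ∑ b : Fin 5, if a < b then eE a b else 0
/-- `ρ₁ = 3e_L + Σ_{{a,b}} e_{ab}`. -/
def ρ₁ : Fin 16 → ℝ :=
  (3 : ℝ) • eL + ∑ a : Fin 5, ∑ b : Fin 5, if a < b then eE a b else 0

/-- `ρ₂ = e_L + e₅`. -/
def ρ₂ : Fin 16 → ℝ := eL + eP 4

/-- `ρ₃ = 2e_L + e₁₄ + e₁₅ + e₂₄ + e₂₅ + e₃₄ + e₃₅`. -/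
def ρ₃ : Fin 16 → ℝ :=
  (2 : ℝ) • eL + eE 0 3 + eE 0 4 + eE 1 3 + eE 1 4 + eE 2 3 + eE 2 4

/-- `ρ₄ = e_L + e₂₅ + e₃₄`. -/
def ρ₄ : Fin 16 → ℝ := eL + eE 1 4 + eE 2 3

set_option maxRecDepth 40000

def idxE (a b : Fin 5) : Fin 16 :=
  if a.val < b.val then pairIdx a.val b.val else pairIdx b.val a.val

lemma ip_single (j : Fin 16) (v : Fin 16 → ℝ) : ip (Pi.single j 1) v = v j := by
  simp [ip, Pi.single_apply, ite_mul]

lemma ip_eL (v : Fin 16 → ℝ) : ip eL v = v 0 := ip_single 0 v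
lemma ip_eP (i : Fin 5) (v : Fin 16 → ℝ) : ip (eP i) v = v ⟨i.val+1, by omega⟩ := ip_single _ v
lemma ip_eE (a b : Fin 5) (v : Fin 16 → ℝ) : ip (eE a b) v = v (idxE a b) := ip_single _ v

lemma ip_add (x y v : Fin 16 → ℝ) : ip (x+y) v = ip x v + ip y v := by
  simp [ip, add_mul, Finset.sum_add_distrib]
lemma ip_sub (x y v : Fin 16 → ℝ) : ip (x-y) v = ip x v - ip y v := by
  simp [ip, sub_mul, Finset.sum_sub_distrib]
lemma ip_neg (x v : Fin 16 → ℝ) : ip (-x) v = -(ip x v) := by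
  simp [ip, neg_mul]
lemma ip_smul (c : ℝ) (x v : Fin 16 → ℝ) : ip (c • x) v = c * ip x v := by
  simp [ip, mul_assoc, Finset.mul_sum]
lemma ip_sum {n : ℕ} (f : Fin n → Fin 16 → ℝ) (v : Fin 16 → ℝ) :
    ip (∑ i, f i) v = ∑ i, ip (f i) v := by
  simp only [ip, Finset.sum_apply, Finset.sum_mul]
  exact Finset.sum_comm

lemma idxE_ge (a b : Fin 5) (h : a ≠ b) : 6 ≤ (idxE a b).val := by
  revert h; revert a b; decide

set_option maxHeartbeats 4000000 in
lemma rho1_apply : ∀ j : Fin 16, ρ₁ j = if j.val = 0 then 3 else if j.val ≤ 5 then 0 else 1 := by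
  intro j; fin_cases j <;>
    simp (config := { decide := true }) [ρ₁, eL, eE, pairIdx, Pi.single_apply,
      Fin.sum_univ_five, Finset.sum_apply]
lemma rho1_L : ρ₁ 0 = 3 := by
  rw [rho1_apply]; norm_num

lemma rho1_pt (i : Fin 5) : ρ₁ ⟨i.val+1, by omega⟩ = 0 := by
  have h5 := i.isLt
  rw [rho1_apply]
  have hv : ((⟨i.val+1, by omega⟩ : Fin 16)).val = i.val + 1 := rfl
  rw [hv, if_neg (by omega), if_pos (by omega)]

lemma rho1_pair (a b : Fin 5) (h : a ≠ b) : ρ₁ (idxE a b) = 1 := by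
  have h6 := idxE_ge a b h
  rw [rho1_apply, if_neg (by omega), if_neg (by omega)]

set_option maxHeartbeats 4000000 in
lemma rho1_dual : ρ₁ ∈ GammaDual := by
  intro g hg
  rcases hg with ⟨i, rfl⟩ | ⟨a, b, hab, rfl⟩ | ⟨k, l, m, hd, rfl⟩ | ⟨j, a, b, c, d, hd, rfl⟩
  · rw [ip_eP, rho1_pt]
  · rw [ip_eE, rho1_pair a b hab]; norm_num
  · obtain ⟨h1, h2, h3⟩ := hd
    rw [ip_sub, ip_sub, ip_sub, ip_sub, ip_sub, ip_sub, ip_eL, ip_eP, ip_eP, ip_eP,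
      ip_eE, ip_eE, ip_eE, rho1_pair k l h1, rho1_pair k m h2, rho1_pair l m h3,
      rho1_pt, rho1_pt, rho1_pt, rho1_L]
    norm_num
  · obtain ⟨-, -, -, -, -, h6, h7, h8, h9, -⟩ := hd
    rw [ip_sub, ip_sub, ip_sub, ip_sub, ip_sub, ip_smul, ip_eL, ip_sum, ip_eE, ip_eE,
      ip_eE, ip_eE, rho1_pair a c h6, rho1_pair a d h7, rho1_pair b c h8, rho1_pair b d h9,
      rho1_L, Fin.sum_univ_five]
    simp only [ip_eP, rho1_pt]
    norm_num
set_option maxHeartbeats 4000000 in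
lemma rho2_apply : ∀ j : Fin 16, ρ₂ j = if j.val = 0 ∨ j.val = 5 then 1 else 0 := by
  intro j; fin_cases j <;>
    simp (config := { decide := true }) [ρ₂, eL, eP, Pi.single_apply]

set_option maxHeartbeats 4000000 in
lemma rho3_apply : ∀ j : Fin 16, ρ₃ j =
    if j.val = 0 then 2
    else if j.val = 8 ∨ j.val = 9 ∨ j.val = 11 ∨ j.val = 12 ∨ j.val = 13 ∨ j.val = 14 then 1
    else 0 := by
  intro j; fin_cases j <;>
    simp (config := { decide := true }) [ρ₃, eL, eE, pairIdx, Pi.single_apply]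

set_option maxHeartbeats 4000000 in
lemma rho4_apply : ∀ j : Fin 16, ρ₄ j = if j.val = 0 ∨ j.val = 12 ∨ j.val = 13 then 1 else 0 := by
  intro j; fin_cases j <;>
    simp (config := { decide := true }) [ρ₄, eL, eE, pairIdx, Pi.single_apply]
lemma fv_ne {n : ℕ} {a b : Fin n} (h : a ≠ b) : a.val ≠ b.val := fun hh => h (Fin.ext hh)

lemma rho2_L : ρ₂ 0 = 1 := by rw [rho2_apply]; norm_num
lemma rho2_pt (i : Fin 5) : ρ₂ ⟨i.val+1, by omega⟩ = if i.val = 4 then 1 else 0 := by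
  have h5 := i.isLt
  rw [rho2_apply]
  have hv : ((⟨i.val+1, by omega⟩ : Fin 16)).val = i.val + 1 := rfl
  rw [hv]
  by_cases h : i.val = 4
  · rw [if_pos (by omega), if_pos h]
  · rw [if_neg (by omega), if_neg h]
lemma rho2_pair (a b : Fin 5) (h : a ≠ b) : ρ₂ (idxE a b) = 0 := by
  have h6 := idxE_ge a b h
  have h15 := (idxE a b).isLt
  rw [rho2_apply, if_neg (by omega)]

set_option maxHeartbeats 4000000 in
lemma rho2_dual : ρ₂ ∈ GammaDual := by
  intro g hg
  rcases hg with ⟨i, rfl⟩ | ⟨a, b, hab, rfl⟩ | ⟨k, l, m, hd, rfl⟩ | ⟨j, a, b, c, d, hd, rfl⟩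
  · rw [ip_eP, rho2_pt]; split_ifs <;> norm_num
  · rw [ip_eE, rho2_pair a b hab]
  · obtain ⟨h1, h2, h3⟩ := hd
    have hv1 := fv_ne h1; have hv2 := fv_ne h2; have hv3 := fv_ne h3
    rw [ip_sub, ip_sub, ip_sub, ip_sub, ip_sub, ip_sub, ip_eL, ip_eP, ip_eP, ip_eP,
      ip_eE, ip_eE, ip_eE, rho2_pair k l h1, rho2_pair k m h2, rho2_pair l m h3,
      rho2_pt, rho2_pt, rho2_pt, rho2_L]
    split_ifs <;> first | (exfalso; omega) | norm_num
  · obtain ⟨-, -, -, -, -, h6, h7, h8, h9, -⟩ := hd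
    rw [ip_sub, ip_sub, ip_sub, ip_sub, ip_sub, ip_smul, ip_eL, ip_sum, ip_eE, ip_eE,
      ip_eE, ip_eE, rho2_pair a c h6, rho2_pair a d h7, rho2_pair b c h8, rho2_pair b d h9,
      rho2_L, Fin.sum_univ_five]
    simp (config := { decide := true }) only [ip_eP, rho2_pt]
    norm_num
lemma rho3_L : ρ₃ 0 = 2 := by rw [rho3_apply]; norm_num
lemma rho3_pt (i : Fin 5) : ρ₃ ⟨i.val+1, by omega⟩ = 0 := by
  have h5 := i.isLt
  rw [rho3_apply]
  have hv : ((⟨i.val+1, by omega⟩ : Fin 16)).val = i.val + 1 := rfl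
  rw [hv, if_neg (by omega), if_neg (by omega)]

set_option maxHeartbeats 4000000 in
lemma rho3_pair (a b : Fin 5) (h : a ≠ b) : ρ₃ (idxE a b) =
    if (a.val ≤ 2 ∧ 3 ≤ b.val) ∨ (b.val ≤ 2 ∧ 3 ≤ a.val) then 1 else 0 := by
  fin_cases a <;> fin_cases b <;>
    simp_all (config := { decide := true }) [idxE, pairIdx, rho3_apply]

lemma rho3_pair_bd (a b : Fin 5) (h : a ≠ b) : 0 ≤ ρ₃ (idxE a b) ∧ ρ₃ (idxE a b) ≤ 1 := by
  rw [rho3_pair a b h]; split_ifs <;> norm_num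

set_option maxHeartbeats 4000000 in
lemma rho3_dual : ρ₃ ∈ GammaDual := by
  intro g hg
  rcases hg with ⟨i, rfl⟩ | ⟨a, b, hab, rfl⟩ | ⟨k, l, m, hd, rfl⟩ | ⟨j, a, b, c, d, hd, rfl⟩
  · rw [ip_eP, rho3_pt]
  · rw [ip_eE]; exact (rho3_pair_bd a b hab).1
  · obtain ⟨h1, h2, h3⟩ := hd
    have hv1 := fv_ne h1; have hv2 := fv_ne h2; have hv3 := fv_ne h3
    rw [ip_sub, ip_sub, ip_sub, ip_sub, ip_sub, ip_sub, ip_eL, ip_eP, ip_eP, ip_eP,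
      ip_eE, ip_eE, ip_eE, rho3_pair k l h1, rho3_pair k m h2, rho3_pair l m h3,
      rho3_pt, rho3_pt, rho3_pt, rho3_L]
    split_ifs <;> first | (exfalso; omega) | norm_num
  · obtain ⟨-, -, -, -, -, h6, h7, h8, h9, -⟩ := hd
    rw [ip_sub, ip_sub, ip_sub, ip_sub, ip_sub, ip_smul, ip_eL, ip_sum, ip_eE, ip_eE,
      ip_eE, ip_eE, rho3_L, Fin.sum_univ_five]
    simp only [ip_eP, rho3_pt]
    have b1 := rho3_pair_bd a c h6
    have b2 := rho3_pair_bd a d h7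
    have b3 := rho3_pair_bd b c h8
    have b4 := rho3_pair_bd b d h9
    linarith [b1.1, b1.2, b2.1, b2.2, b3.1, b3.2, b4.1, b4.2]

lemma rho4_L : ρ₄ 0 = 1 := by rw [rho4_apply]; norm_num
lemma rho4_pt (i : Fin 5) : ρ₄ ⟨i.val+1, by omega⟩ = 0 := by
  have h5 := i.isLt
  rw [rho4_apply]
  have hv : ((⟨i.val+1, by omega⟩ : Fin 16)).val = i.val + 1 := rfl
  rw [hv, if_neg (by omega)]

set_option maxHeartbeats 4000000 in
lemma rho4_pair (a b : Fin 5) (h : a ≠ b) : ρ₄ (idxE a b) =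
    if a.val + b.val = 5 then 1 else 0 := by
  fin_cases a <;> fin_cases b <;>
    simp_all (config := { decide := true }) [idxE, pairIdx, rho4_apply]

set_option maxHeartbeats 4000000 in
lemma rho4_dual : ρ₄ ∈ GammaDual := by
  intro g hg
  rcases hg with ⟨i, rfl⟩ | ⟨a, b, hab, rfl⟩ | ⟨k, l, m, hd, rfl⟩ | ⟨j, a, b, c, d, hd, rfl⟩
  · rw [ip_eP, rho4_pt]
  · rw [ip_eE, rho4_pair a b hab]; split_ifs <;> norm_num
  · obtain ⟨h1, h2, h3⟩ := hd
    have hv1 := fv_ne h1; have hv2 := fv_ne h2; have hv3 := fv_ne h3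
    rw [ip_sub, ip_sub, ip_sub, ip_sub, ip_sub, ip_sub, ip_eL, ip_eP, ip_eP, ip_eP,
      ip_eE, ip_eE, ip_eE, rho4_pair k l h1, rho4_pair k m h2, rho4_pair l m h3,
      rho4_pt, rho4_pt, rho4_pt, rho4_L]
    split_ifs <;> first | (exfalso; omega) | norm_num
  · obtain ⟨-, -, -, -, hab, hac, had, hbc, hbd, hcd⟩ := hd
    have v1 := fv_ne hab; have v2 := fv_ne hac; have v3 := fv_ne had
    have v4 := fv_ne hbc; have v5 := fv_ne hbd; have v6 := fv_ne hcd
    rw [ip_sub, ip_sub, ip_sub, ip_sub, ip_sub, ip_smul, ip_eL, ip_sum, ip_eE, ip_eE,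
      ip_eE, ip_eE, rho4_pair a c hac, rho4_pair a d had, rho4_pair b c hbc,
      rho4_pair b d hbd, rho4_L, Fin.sum_univ_five]
    simp only [ip_eP, rho4_pt]
    split_ifs <;> first | (exfalso; omega) | norm_num
lemma ip_ite (P : Prop) [Decidable P] (x v : Fin 16 → ℝ) :
    ip (if P then x else 0) v = if P then ip x v else 0 := by
  split <;> simp [ip]

lemma Kcl_ip (v : Fin 16 → ℝ) : ip Kcl v =
    -(4 * v 0) + 2 * (∑ i : Fin 5, v ⟨i.val + 1, by omega⟩) +
      ∑ a : Fin 5, ∑ b : Fin 5, if a < b then v (idxE a b) else 0 := by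
  rw [Kcl, ip_add, ip_add, ip_neg, ip_smul, ip_smul, ip_eL, ip_sum]
  simp only [ip_sum, ip_ite, ip_eE, ip_eP]

set_option maxHeartbeats 4000000 in
lemma K1 : ip Kcl ρ₁ = -2 := by
  rw [Kcl_ip]
  simp (config := { decide := true }) only [Fin.sum_univ_five, rho1_pt, idxE, pairIdx, rho1_apply]
  norm_num

set_option maxHeartbeats 4000000 in
lemma K2 : ip Kcl ρ₂ = -2 := by
  rw [Kcl_ip]
  simp (config := { decide := true }) only [Fin.sum_univ_five, idxE, pairIdx, rho2_apply]
  norm_num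

set_option maxHeartbeats 4000000 in
lemma K3 : ip Kcl ρ₃ = -2 := by
  rw [Kcl_ip]
  simp (config := { decide := true }) only [Fin.sum_univ_five, idxE, pairIdx, rho3_apply]
  norm_num

set_option maxHeartbeats 4000000 in
lemma K4 : ip Kcl ρ₄ = -2 := by
  rw [Kcl_ip]
  simp (config := { decide := true }) only [Fin.sum_univ_five, idxE, pairIdx, rho4_apply]
  norm_num
set_option maxHeartbeats 4000000 in
lemma eq1 : ρ₁ = A2 0 4 1 2 3 + A2 0 2 1 3 4 + A2 2 4 0 1 3 + (2 : ℝ) • B6 1 3 := by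
  funext j
  rw [rho1_apply]
  fin_cases j <;>
    simp (config := { decide := true }) [A2, B6, eL, eE, eP, pairIdx, Pi.single_apply] <;>
    norm_num

set_option maxHeartbeats 4000000 in
lemma eq2 : ρ₂ = A3 2 3 4 0 1 + B6 0 1 := by
  funext j
  rw [rho2_apply]
  fin_cases j <;>
    simp (config := { decide := true }) [A3, B6, eL, eE, eP, pairIdx, Pi.single_apply] <;>
    norm_num

set_option maxHeartbeats 4000000 in
lemma eq3 : ρ₃ = A2 0 4 1 2 3 + A2 0 3 1 2 4 + (2 : ℝ) • B6 1 2 := by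
  funext j
  rw [rho3_apply]
  fin_cases j <;>
    simp (config := { decide := true }) [A2, B6, eL, eE, eP, pairIdx, Pi.single_apply] <;>
    norm_num

set_option maxHeartbeats 4000000 in
lemma eq4 : ρ₄ = A2 1 4 0 2 3 + B6 0 3 + B6 0 2 := by
  funext j
  rw [rho4_apply]
  fin_cases j <;>
    simp (config := { decide := true }) [A2, B6, eL, eE, eP, pairIdx, Pi.single_apply] <;>
    norm_num
lemma memB6 (a b : Fin 5) (h : a ≠ b) : B6 a b ∈ Aset := Or.inl ⟨a, b, h, rfl⟩
lemma memA2 (i j k l m : Fin 5) (h : Distinct5 i j k l m) : A2 i j k l m ∈ Aset :=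
  Or.inr (Or.inr (Or.inl ⟨i, j, k, l, m, h, rfl⟩))
lemma memA3 (i j k a b : Fin 5) (h : Distinct5 i j k a b) : A3 i j k a b ∈ Aset :=
  Or.inr (Or.inr (Or.inr (Or.inr (Or.inl ⟨i, j, k, a, b, h, rfl⟩))))

lemma d5 {i j k l m : Fin 5} (h1 : i ≠ j) (h2 : i ≠ k) (h3 : i ≠ l) (h4 : i ≠ m)
    (h5 : j ≠ k) (h6 : j ≠ l) (h7 : j ≠ m) (h8 : k ≠ l) (h9 : k ≠ m) (h10 : l ≠ m) :
    Distinct5 i j k l m := ⟨h1, h2, h3, h4, h5, h6, h7, h8, h9, h10⟩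

lemma cone1 : ρ₁ ∈ coneGen Aset := by
  refine ⟨4, ![1, 1, 1, 2], ![A2 0 4 1 2 3, A2 0 2 1 3 4, A2 2 4 0 1 3, B6 1 3], ?_, ?_, ?_⟩
  · intro t; fin_cases t <;> norm_num
  · intro t
    fin_cases t
    · exact memA2 0 4 1 2 3 (d5 (by decide) (by decide) (by decide) (by decide) (by decide) (by decide) (by decide) (by decide) (by decide) (by decide))
    · exact memA2 0 2 1 3 4 (d5 (by decide) (by decide) (by decide) (by decide) (by decide) (by decide) (by decide) (by decide) (by decide) (by decide))
    · exact memA2 2 4 0 1 3 (d5 (by decide) (by decide) (by decide) (by decide) (by decide) (by decide) (by decide) (by decide) (by decide) (by decide))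
    · exact memB6 _ _ (by decide)
  · rw [eq1, Fin.sum_univ_four]
    norm_num [Matrix.cons_val_two, Matrix.cons_val_three, Matrix.vecHead, Matrix.vecTail]

lemma cone2 : ρ₂ ∈ coneGen Aset := by
  refine ⟨2, ![1, 1], ![A3 2 3 4 0 1, B6 0 1], ?_, ?_, ?_⟩
  · intro t; fin_cases t <;> norm_num
  · intro t
    fin_cases t
    · exact memA3 2 3 4 0 1 (d5 (by decide) (by decide) (by decide) (by decide) (by decide) (by decide) (by decide) (by decide) (by decide) (by decide))
    · exact memB6 _ _ (by decide)
  · rw [eq2, Fin.sum_univ_two]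
    norm_num

lemma cone3 : ρ₃ ∈ coneGen Aset := by
  refine ⟨3, ![1, 1, 2], ![A2 0 4 1 2 3, A2 0 3 1 2 4, B6 1 2], ?_, ?_, ?_⟩
  · intro t; fin_cases t <;> norm_num
  · intro t
    fin_cases t
    · exact memA2 0 4 1 2 3 (d5 (by decide) (by decide) (by decide) (by decide) (by decide) (by decide) (by decide) (by decide) (by decide) (by decide))
    · exact memA2 0 3 1 2 4 (d5 (by decide) (by decide) (by decide) (by decide) (by decide) (by decide) (by decide) (by decide) (by decide) (by decide))
    · exact memB6 _ _ (by decide)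
  · rw [eq3, Fin.sum_univ_three]
    norm_num [Matrix.cons_val_two, Matrix.cons_val_three, Matrix.vecHead, Matrix.vecTail]

lemma cone4 : ρ₄ ∈ coneGen Aset := by
  refine ⟨3, ![1, 1, 1], ![A2 1 4 0 2 3, B6 0 3, B6 0 2], ?_, ?_, ?_⟩
  · intro t; fin_cases t <;> norm_num
  · intro t
    fin_cases t
    · exact memA2 1 4 0 2 3 (d5 (by decide) (by decide) (by decide) (by decide) (by decide) (by decide) (by decide) (by decide) (by decide) (by decide))
    · exact memB6 _ _ (by decide)
    · exact memB6 _ _ (by decide)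
  · rw [eq4, Fin.sum_univ_three]
    norm_num [Matrix.cons_val_two, Matrix.cons_val_three, Matrix.vecHead, Matrix.vecTail]

/-- The degree-2 coextremal representatives lie in `Γ^∨`, have `⟨K,ρ⟩ = -2`, and
decompose as: `ρ₁ = A₁₅ + A₁₃ + A₃₅ + 2B₂₄₆`, `ρ₂ = A₃₄;₅ + B₁₂₆`,
`ρ₃ = A₁₅ + A₁₄ + 2B₂₃₆`, `ρ₄ = A₂₅ + B₁₄₆ + B₁₃₆` (all indices `1`-based in the paper,
`0`-based in `Fin 5` here); hence each lies in `cone(𝒜)`. -/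
theorem deg2_coextremal_decompositions :
    (ρ₁ ∈ GammaDual ∧ ip Kcl ρ₁ = -2 ∧
      ρ₁ = A2 0 4 1 2 3 + A2 0 2 1 3 4 + A2 2 4 0 1 3 + (2 : ℝ) • B6 1 3 ∧
      ρ₁ ∈ coneGen Aset) ∧
    (ρ₂ ∈ GammaDual ∧ ip Kcl ρ₂ = -2 ∧
      ρ₂ = A3 2 3 4 0 1 + B6 0 1 ∧
      ρ₂ ∈ coneGen Aset) ∧
    (ρ₃ ∈ GammaDual ∧ ip Kcl ρ₃ = -2 ∧
      ρ₃ = A2 0 4 1 2 3 + A2 0 3 1 2 4 + (2 : ℝ) • B6 1 2 ∧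
      ρ₃ ∈ coneGen Aset) ∧
    (ρ₄ ∈ GammaDual ∧ ip Kcl ρ₄ = -2 ∧
      ρ₄ = A2 1 4 0 2 3 + B6 0 3 + B6 0 2 ∧
      ρ₄ ∈ coneGen Aset) := by
  exact ⟨⟨rho1_dual, K1, eq1, cone1⟩, ⟨rho2_dual, K2, eq2, cone2⟩,
    ⟨rho3_dual, K3, eq3, cone3⟩, ⟨rho4_dual, K4, eq4, cone4⟩⟩
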